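/- In ℤ/2[σ_1,σ_2,σ_3,σ_4] (the polynomial ring on the elementary symmetric polynomials in four variables over ℤ/2), the ideal of algebraic relations among the four elements σ_1², σ_1³, σ_1σ_3 + σ_2², and σ_1²σ_4 + σ_3² + σ_1σ_2σ_3 is the principal ideal generated by the relation (σ_1²)³ + (σ_1³)² = 0; i.e., the kernel of the map ℤ/2[a,b,c,d] → ℤ/2[σ_1,σ_2,σ_3,σ_4], a↦σ_1², b↦σ_1³, c↦σ_1σ_3+σ_2², d↦σ_1²σ_4+σ_3²+σ_1σ_2σ_3, is generated by a³ + b². -/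

import Mathlib

open MvPolynomial

private lemma two_eq_zero {σ : Type*} : (2 : MvPolynomial σ (ZMod 2)) = 0 := by
  have := CharP.cast_eq_zero (MvPolynomial σ (ZMod 2)) 2
  exact_mod_cast this

-- squaring lemma
private lemma aeval_sq {n : ℕ} (v : Fin n → MvPolynomial (Fin 4) (ZMod 2))
    (s : MvPolynomial (Fin n) (ZMod 2)) :
    aeval (fun i => (v i)^2) s = (aeval v s)^2 := by
  induction s using MvPolynomial.induction_on with
  | C a =>
      simp only [aeval_C]
      rw [← map_pow]
      congr 1
      revert a; decide
  | add p q hp hq =>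
      rw [map_add, map_add, hp, hq]
      exact (add_pow_char _ _ _).symm
  | mul_X p i hp =>
      rw [map_mul, map_mul, hp, aeval_X, aeval_X, mul_pow]

noncomputable def e4 : MvPolynomial (Fin 4) (ZMod 2) ≃ₐ[ZMod 2]
    Polynomial (MvPolynomial (Fin 3) (ZMod 2)) :=
  (renameEquiv (ZMod 2) (Equiv.swap (0:Fin 4) 3)).trans (finSuccEquiv (ZMod 2) 3)

private lemma e4_X3 : e4 (X 3) = Polynomial.X := by
  show finSuccEquiv (ZMod 2) 3 (rename _ (X 3)) = _
  rw [rename_X, Equiv.swap_apply_right]; exact finSuccEquiv_X_zero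
private lemma e4_X0 : e4 (X 0) = Polynomial.C (X 2) := by
  show finSuccEquiv (ZMod 2) 3 (rename _ (X 0)) = _
  rw [rename_X, Equiv.swap_apply_left]; exact finSuccEquiv_X_succ (j := 2)
private lemma e4_X1 : e4 (X 1) = Polynomial.C (X 0) := by
  show finSuccEquiv (ZMod 2) 3 (rename _ (X 1)) = _
  rw [rename_X, Equiv.swap_apply_of_ne_of_ne (by decide) (by decide)]
  exact finSuccEquiv_X_succ (j := 0)
private lemma e4_X2 : e4 (X 2) = Polynomial.C (X 1) := by
  show finSuccEquiv (ZMod 2) 3 (rename _ (X 2)) = _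
  rw [rename_X, Equiv.swap_apply_of_ne_of_ne (by decide) (by decide)]
  exact finSuccEquiv_X_succ (j := 1)
private lemma e4_C (a : ZMod 2) : e4 (C a) = Polynomial.C (C a) := by
  show finSuccEquiv (ZMod 2) 3 (rename _ (C a)) = _
  rw [rename_C, finSuccEquiv_apply, eval₂Hom_C]
  rfl

private lemma E_injective :
    Function.Injective (aeval ![X 0, X 1, X 2, X 0 * X 3] :
      MvPolynomial (Fin 4) (ZMod 2) →ₐ[ZMod 2] MvPolynomial (Fin 4) (ZMod 2)) := by
  set c : Polynomial (MvPolynomial (Fin 3) (ZMod 2)) := Polynomial.C (X 2) * Polynomial.X with hc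
  have keyX : ∀ i : Fin 4, e4 (aeval (R := ZMod 2) ![X 0, X 1, X 2, X 0 * X 3] (X i)) = (e4 (X i)).comp c := by
    intro i
    fin_cases i
    · rw [aeval_X]
      show e4 (X 0) = (e4 (X 0)).comp c
      rw [e4_X0, Polynomial.C_comp]
    · rw [aeval_X]
      show e4 (X 1) = (e4 (X 1)).comp c
      rw [e4_X1, Polynomial.C_comp]
    · rw [aeval_X]
      show e4 (X 2) = (e4 (X 2)).comp c
      rw [e4_X2, Polynomial.C_comp]
    · rw [aeval_X]
      show e4 (X 0 * X 3) = (e4 (X 3)).comp c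
      rw [map_mul, e4_X0, e4_X3, Polynomial.X_comp]
  have key : ∀ p : MvPolynomial (Fin 4) (ZMod 2),
      e4 (aeval ![X 0, X 1, X 2, X 0 * X 3] p) = (e4 p).comp c := by
    intro p
    induction p using MvPolynomial.induction_on with
    | C a => rw [aeval_C]; show e4 (C a) = (e4 (C a)).comp c
             rw [e4_C, Polynomial.C_comp]
    | add p q hp hq => rw [map_add, map_add, map_add, Polynomial.add_comp, hp, hq]
    | mul_X p i hp => rw [map_mul, map_mul, map_mul, Polynomial.mul_comp, hp, keyX]
  intro p q hpq
  have h := congrArg e4 hpq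
  rw [key, key] at h
  have hsub : ((e4 p) - (e4 q)).comp c = 0 := by
    rw [Polynomial.sub_comp, h, sub_self]
  rcases Polynomial.comp_eq_zero_iff.mp hsub with h0 | ⟨_, hcc⟩
  · exact e4.injective (sub_eq_zero.mp h0)
  · exfalso
    have hc0 : c.coeff 0 = 0 := by simp [hc]
    rw [hc0, map_zero] at hcc
    have hcne : c ≠ 0 := by
      simp only [hc, ne_eq, mul_eq_zero, Polynomial.X_ne_zero, or_false]
      intro hh
      have h3 : (X 2 : MvPolynomial (Fin 3) (ZMod 2)) = 0 :=
        Polynomial.C_injective (by simpa using hh)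
      exact X_ne_zero (R := ZMod 2) (2 : Fin 3) h3
    exact hcne hcc

private lemma u_indep (s : MvPolynomial (Fin 3) (ZMod 2))
    (h : aeval ![(X 0 : MvPolynomial (Fin 4) (ZMod 2)), X 1, X 0 * X 3] s = 0) : s = 0 := by
  have hre : (aeval (R := ZMod 2) ![(X 0 : MvPolynomial (Fin 4) (ZMod 2)), X 1, X 0 * X 3] s)
      = aeval ![X 0, X 1, X 2, X 0 * X 3] (rename (![0, 1, 3] : Fin 3 → Fin 4) s) := by
    rw [aeval_rename]
    have hfun : (![(X 0 : MvPolynomial (Fin 4) (ZMod 2)), X 1, X 2, X 0 * X 3] ∘ ![0, 1, 3])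
        = ![X 0, X 1, X 0 * X 3] := by
      funext i; fin_cases i <;> rfl
    rw [hfun]
  rw [hre] at h
  have h0 : (aeval (R := ZMod 2) ![X 0, X 1, X 2, X 0 * X 3]) (rename (![0, 1, 3] : Fin 3 → Fin 4) s)
      = aeval (R := ZMod 2) ![(X 0 : MvPolynomial (Fin 4) (ZMod 2)), X 1, X 2, X 0 * X 3] (0 : MvPolynomial (Fin 4) (ZMod 2)) := by simpa using h
  have hz : rename (![0, 1, 3] : Fin 3 → Fin 4) s = 0 := E_injective h0
  exact rename_injective (![0, 1, 3] : Fin 3 → Fin 4) (by decide) (by simpa using hz)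

private lemma w_indep (s : MvPolynomial (Fin 3) (ZMod 2))
    (h : aeval ![(X 0 : MvPolynomial (Fin 4) (ZMod 2)) ^ 2, X 0 * X 2 + X 1 ^ 2,
        X 0 ^ 2 * X 3 + X 2 ^ 2 + X 0 * X 1 * X 2] s = 0) : s = 0 := by
  have h2 : (2 : MvPolynomial (Fin 4) (ZMod 2)) = 0 := by
    have := CharP.cast_eq_zero (MvPolynomial (Fin 4) (ZMod 2)) 2
    exact_mod_cast this
  set hmap : MvPolynomial (Fin 4) (ZMod 2) →ₐ[ZMod 2] MvPolynomial (Fin 4) (ZMod 2) :=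
    aeval ![X 0, X 1 + X 0 * X 2, X 0 * X 2 ^ 2,
      X 3 ^ 2 + X 2 ^ 4 + X 1 * X 2 ^ 2 + X 0 * X 2 ^ 3] with hh
  have hcomp : hmap (aeval ![X 0 ^ 2, X 0 * X 2 + X 1 ^ 2,
      X 0 ^ 2 * X 3 + X 2 ^ 2 + X 0 * X 1 * X 2] s)
      = aeval (fun i => (![(X 0 : MvPolynomial (Fin 4) (ZMod 2)), X 1, X 0 * X 3] i) ^ 2) s := by
    rw [← AlgHom.comp_apply, comp_aeval]
    have hfun : (fun i => hmap (![(X 0 : MvPolynomial (Fin 4) (ZMod 2)) ^ 2,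
          X 0 * X 2 + X 1 ^ 2, X 0 ^ 2 * X 3 + X 2 ^ 2 + X 0 * X 1 * X 2] i))
        = fun i => (![(X 0 : MvPolynomial (Fin 4) (ZMod 2)), X 1, X 0 * X 3] i) ^ 2 := by
      funext i; fin_cases i
      · show hmap (X 0 ^ 2) = (X 0) ^ 2
        simp only [hh, map_pow, aeval_X]
        norm_num [Matrix.cons_val_zero]
      · show hmap (X 0 * X 2 + X 1 ^ 2) = (X 1) ^ 2
        simp only [hh, map_add, map_mul, map_pow, aeval_X]
        norm_num [Matrix.cons_val_zero, Matrix.cons_val_one, Matrix.cons_val_two, Matrix.cons_val_three]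
        linear_combination (X 0 ^ 2 * X 2 ^ 2 + X 0 * X 1 * X 2) * h2
      · show hmap (X 0 ^ 2 * X 3 + X 2 ^ 2 + X 0 * X 1 * X 2) = (X 0 * X 3) ^ 2
        simp only [hh, map_add, map_mul, map_pow, aeval_X]
        norm_num [Matrix.cons_val_zero, Matrix.cons_val_one, Matrix.cons_val_two, Matrix.cons_val_three]
        linear_combination (X 0 ^ 2 * X 2 ^ 4 + X 0 ^ 2 * X 1 * X 2 ^ 2 + X 0 ^ 3 * X 2 ^ 3) * h2
    rw [hfun]
  rw [h, map_zero] at hcomp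
  rw [aeval_sq] at hcomp
  have := pow_eq_zero_iff (n := 2) (by norm_num) |>.mp hcomp.symm
  exact u_indep s this

private lemma parity (r0 r1 : MvPolynomial (Fin 3) (ZMod 2))
    (h : r0 ^ 2 + X 0 ^ 3 * r1 ^ 2 = 0) : r0 = 0 ∧ r1 = 0 := by
  have h2 : (2 : MvPolynomial (Fin 3) (ZMod 2)) = 0 := by
    have := CharP.cast_eq_zero (MvPolynomial (Fin 3) (ZMod 2)) 2
    exact_mod_cast this
  have heq : r0 ^ 2 = X 0 ^ 3 * r1 ^ 2 := by
    linear_combination h - X 0 ^ 3 * r1 ^ 2 * h2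
  have hr1 : r1 = 0 := by
    by_contra hr1
    have hr0 : r0 ≠ 0 := fun h0 => hr1 (by rw [h0] at heq; simpa using heq.symm)
    have hdeg := congrArg (fun p => ((finSuccEquiv (ZMod 2) 2) p).natDegree) heq
    simp only [map_mul, map_pow, finSuccEquiv_X_zero] at hdeg
    have e0 : (finSuccEquiv (ZMod 2) 2) r0 ≠ 0 := fun hh =>
      hr0 ((finSuccEquiv (ZMod 2) 2).injective (by simpa using hh))
    have e1 : (finSuccEquiv (ZMod 2) 2) r1 ≠ 0 := fun hh =>
      hr1 ((finSuccEquiv (ZMod 2) 2).injective (by simpa using hh))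
    rw [Polynomial.natDegree_mul (pow_ne_zero _ Polynomial.X_ne_zero) (pow_ne_zero _ e1),
      ] at hdeg
    simp only [Polynomial.natDegree_pow, Polynomial.natDegree_X] at hdeg
    omega
  refine ⟨?_, hr1⟩
  rw [hr1] at heq
  simpa using pow_eq_zero_iff (n := 2) (by norm_num) |>.mp (by simpa using heq)

private lemma division (p : MvPolynomial (Fin 4) (ZMod 2)) :
    ∃ (q : MvPolynomial (Fin 4) (ZMod 2)) (r0 r1 : MvPolynomial (Fin 3) (ZMod 2)),
      p = q * (X 0 ^ 3 + X 1 ^ 2) + rename (![0, 2, 3] : Fin 3 → Fin 4) r0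
        + X 1 * rename (![0, 2, 3] : Fin 3 → Fin 4) r1 := by
  have h2 : (2 : MvPolynomial (Fin 4) (ZMod 2)) = 0 := by
    have := CharP.cast_eq_zero (MvPolynomial (Fin 4) (ZMod 2)) 2
    exact_mod_cast this
  induction p using MvPolynomial.induction_on with
  | C a =>
      refine ⟨0, C a, 0, ?_⟩
      rw [rename_C, map_zero]
      ring
  | add p q hp hq =>
      obtain ⟨qp, a0, a1, hp⟩ := hp
      obtain ⟨qq, b0, b1, hq⟩ := hq
      refine ⟨qp + qq, a0 + b0, a1 + b1, ?_⟩
      rw [hp, hq, map_add, map_add]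
      ring
  | mul_X p i hp =>
      obtain ⟨q, r0, r1, hp⟩ := hp
      fin_cases i
      · refine ⟨q * X 0, r0 * X 0, r1 * X 0, ?_⟩
        rw [map_mul, map_mul, rename_X]
        show p * X 0 = _
        have : (![0, 2, 3] : Fin 3 → Fin 4) 0 = 0 := rfl
        rw [this]
        linear_combination X 0 * hp
      · refine ⟨q * X 1 + rename (![0, 2, 3] : Fin 3 → Fin 4) r1, X 0 ^ 3 * r1, r0, ?_⟩
        rw [map_mul, map_pow, rename_X]
        show p * X 1 = _
        have : (![0, 2, 3] : Fin 3 → Fin 4) 0 = 0 := rfl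
        rw [this]
        linear_combination X 1 * hp - X 0 ^ 3 * (rename (![0, 2, 3] : Fin 3 → Fin 4) r1) * h2
      · refine ⟨q * X 2, r0 * X 1, r1 * X 1, ?_⟩
        rw [map_mul, map_mul, rename_X]
        show p * X 2 = _
        have : (![0, 2, 3] : Fin 3 → Fin 4) 1 = 2 := rfl
        rw [this]
        linear_combination X 2 * hp
      · refine ⟨q * X 3, r0 * X 2, r1 * X 2, ?_⟩
        rw [map_mul, map_mul, rename_X]
        show p * X 3 = _
        have : (![0, 2, 3] : Fin 3 → Fin 4) 2 = 3 := rfl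
        rw [this]
        linear_combination X 3 * hp

/-- The kernel of ℤ/2[a,b,c,d] → ℤ/2[σ_1,…,σ_4], a↦σ_1², b↦σ_1³, c↦σ_1σ_3+σ_2²,
d↦σ_1²σ_4+σ_3²+σ_1σ_2σ_3, is the principal ideal generated by a³ + b².
(Here X 0 = σ_1, X 1 = σ_2, X 2 = σ_3, X 3 = σ_4 in the target.) -/
theorem ker_mod2_relations :
    RingHom.ker (aeval
        ![(X 0 : MvPolynomial (Fin 4) (ZMod 2)) ^ 2,
          X 0 ^ 3,
          X 0 * X 2 + X 1 ^ 2,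
          X 0 ^ 2 * X 3 + X 2 ^ 2 + X 0 * X 1 * X 2] :
        MvPolynomial (Fin 4) (ZMod 2) →ₐ[ZMod 2] MvPolynomial (Fin 4) (ZMod 2)) =
      Ideal.span {X 0 ^ 3 + X 1 ^ 2} := by
  have h2 : (2 : MvPolynomial (Fin 4) (ZMod 2)) = 0 := by
    have := CharP.cast_eq_zero (MvPolynomial (Fin 4) (ZMod 2)) 2
    exact_mod_cast this
  set v : Fin 4 → MvPolynomial (Fin 4) (ZMod 2) :=
    ![(X 0 : MvPolynomial (Fin 4) (ZMod 2)) ^ 2, X 0 ^ 3,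
      X 0 * X 2 + X 1 ^ 2, X 0 ^ 2 * X 3 + X 2 ^ 2 + X 0 * X 1 * X 2] with hv
  have hg : aeval (R := ZMod 2) v (X 0 ^ 3 + X 1 ^ 2) = 0 := by
    rw [map_add, map_pow, map_pow, aeval_X, aeval_X]
    show (X 0 ^ 2 : MvPolynomial (Fin 4) (ZMod 2)) ^ 3 + (X 0 ^ 3) ^ 2 = 0
    linear_combination (X 0 : MvPolynomial (Fin 4) (ZMod 2)) ^ 6 * h2
  apply le_antisymm
  · intro p hp
    rw [RingHom.mem_ker] at hp
    obtain ⟨q, r0, r1, hdiv⟩ := division p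
    have hvf : v ∘ (![0, 2, 3] : Fin 3 → Fin 4)
        = ![(X 0 : MvPolynomial (Fin 4) (ZMod 2)) ^ 2, X 0 * X 2 + X 1 ^ 2,
            X 0 ^ 2 * X 3 + X 2 ^ 2 + X 0 * X 1 * X 2] := by
      funext i; fin_cases i <;> rfl
    have haw : aeval ![(X 0 : MvPolynomial (Fin 4) (ZMod 2)) ^ 2, X 0 * X 2 + X 1 ^ 2,
        X 0 ^ 2 * X 3 + X 2 ^ 2 + X 0 * X 1 * X 2] r0
        + X 0 ^ 3 * aeval ![(X 0 : MvPolynomial (Fin 4) (ZMod 2)) ^ 2, X 0 * X 2 + X 1 ^ 2,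
        X 0 ^ 2 * X 3 + X 2 ^ 2 + X 0 * X 1 * X 2] r1 = 0 := by
      rw [hdiv] at hp
      rw [map_add, map_add, map_mul, hg, mul_zero, map_mul, aeval_X,
        aeval_rename, aeval_rename, hvf] at hp
      show _ + v 1 * _ = 0
      rw [← hp]
      ring
    set A0 := aeval ![(X 0 : MvPolynomial (Fin 4) (ZMod 2)) ^ 2, X 0 * X 2 + X 1 ^ 2,
        X 0 ^ 2 * X 3 + X 2 ^ 2 + X 0 * X 1 * X 2] r0 with hA0
    set A1 := aeval ![(X 0 : MvPolynomial (Fin 4) (ZMod 2)) ^ 2, X 0 * X 2 + X 1 ^ 2,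
        X 0 ^ 2 * X 3 + X 2 ^ 2 + X 0 * X 1 * X 2] r1 with hA1
    have hsq : aeval ![(X 0 : MvPolynomial (Fin 4) (ZMod 2)) ^ 2, X 0 * X 2 + X 1 ^ 2,
        X 0 ^ 2 * X 3 + X 2 ^ 2 + X 0 * X 1 * X 2] (r0 ^ 2 + X 0 ^ 3 * r1 ^ 2) = 0 := by
      simp only [map_add, map_pow, map_mul, aeval_X, Matrix.cons_val_zero]
      show A0 ^ 2 + (X 0 ^ 2 : MvPolynomial (Fin 4) (ZMod 2)) ^ 3 * A1 ^ 2 = 0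
      have hA : A0 = X 0 ^ 3 * A1 := by linear_combination haw - X 0 ^ 3 * A1 * h2
      rw [hA]
      linear_combination X 0 ^ 6 * A1 ^ 2 * h2
    obtain ⟨hr0, hr1⟩ := parity r0 r1 (w_indep _ hsq)
    rw [hr0, hr1, map_zero] at hdiv
    simp only [add_zero, mul_zero] at hdiv
    exact Ideal.mem_span_singleton'.mpr ⟨q, hdiv.symm⟩
  · rw [Ideal.span_le, Set.singleton_subset_iff]
    exact hg
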